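/- Fix μ > 0, v₊ > 1, u₋ > u₊, set s = (u₋ − u₊)/(v₊ − 1), let v̄, ū be the limit traveling-wave profiles and define p̄ : ℝ → ℝ by p̄(ξ) = s²(v₊ − 1) for ξ ≤ 0 and p̄(ξ) = 0 for ξ > 0. Then the functions v(t,x) = v̄(x − s t), u(t,x) = ū(x − s t), p(t,x) = p̄(x − s t) satisfy, for every (t,x) with x ≠ s t: ∂ₜv − ∂ₓu = 0 and ∂ₜu + ∂ₓp − μ ∂ₓ((1/v) ∂ₓu) = 0; moreover the unilateral constraint v ≥ 1, (v − 1) p = 0, p ≥ 0 holds at every (t,x). -/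

import Mathlib

open Set Filter Topology

/-- The traveling wave `(v,u,p)(t,x) = (v̄,ū,p̄)(x − st)` solves the free–congested
Navier–Stokes system away from the interface `x = st`, and satisfies the unilateral
constraint everywhere. -/
theorem stmt3 (μ vp um up : ℝ) (hμ : 0 < μ) (hvp : 1 < vp) (hu : up < um)
    (s : ℝ) (hs : s = (um - up) / (vp - 1))
    (vbar : ℝ → ℝ)
    (hvbar : ∀ x : ℝ,
      vbar x = if x ≤ 0 then 1 else vp / (1 + (vp - 1) * Real.exp (-s * vp * x / μ)))
    (ubar : ℝ → ℝ)
    (hubar : ∀ x : ℝ, ubar x = up + s * vp - s * vbar x)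
    (pbar : ℝ → ℝ)
    (hpbar : ∀ x : ℝ, pbar x = if x ≤ 0 then s ^ 2 * (vp - 1) else 0) :
    (∀ t x : ℝ, x ≠ s * t →
      -- mass equation : ∂ₜ v − ∂ₓ u = 0
      deriv (fun τ => vbar (x - s * τ)) t - deriv (fun y => ubar (y - s * t)) x = 0 ∧
      -- momentum equation : ∂ₜ u + ∂ₓ p − μ ∂ₓ((1/v) ∂ₓ u) = 0
      deriv (fun τ => ubar (x - s * τ)) t + deriv (fun y => pbar (y - s * t)) x
        - μ * deriv (fun y => (1 / vbar (y - s * t)) * deriv (fun z => ubar (z - s * t)) y) x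
        = 0) ∧
    (∀ t x : ℝ,
      1 ≤ vbar (x - s * t) ∧
      (vbar (x - s * t) - 1) * pbar (x - s * t) = 0 ∧
      0 ≤ pbar (x - s * t)) := by
  have hs0 : 0 < s := by
    rw [hs]; exact div_pos (by linarith) (by linarith)
  have hμ0 : μ ≠ 0 := hμ.ne'
  have hvp0 : vp ≠ 0 := by linarith
  set E : ℝ → ℝ := fun ξ => Real.exp (-s * vp * ξ / μ) with hEdef
  set D : ℝ → ℝ := fun ξ => 1 + (vp - 1) * E ξ with hDdef
  have hE0 : ∀ ξ, 0 < E ξ := fun ξ => Real.exp_pos _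
  have hD0 : ∀ ξ, 0 < D ξ := fun ξ => by
    have := hE0 ξ; simp only [hDdef]; nlinarith
  have hDne : ∀ ξ, D ξ ≠ 0 := fun ξ => (hD0 ξ).ne'
  set F : ℝ → ℝ := fun ξ => vp / D ξ with hFdef
  set F' : ℝ → ℝ := fun ξ => vp * ((vp - 1) * (s * vp / μ) * E ξ) / (D ξ) ^ 2 with hF'def
  have hEd : ∀ ξ, HasDerivAt E (E ξ * (-s * vp / μ)) ξ := by
    intro ξ
    have h1 : HasDerivAt (fun x : ℝ => -s * vp * x / μ) (-s * vp / μ) ξ := by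
      have h := ((hasDerivAt_id ξ).const_mul (-s * vp)).div_const μ
      simpa using h
    simpa [hEdef] using h1.exp
  have hDd : ∀ ξ, HasDerivAt D ((vp - 1) * (E ξ * (-s * vp / μ))) ξ := by
    intro ξ
    have h := ((hEd ξ).const_mul (vp - 1)).const_add 1
    simpa [hDdef] using h
  have hFd : ∀ ξ, HasDerivAt F (F' ξ) ξ := by
    intro ξ
    have h := (hasDerivAt_const ξ vp).div (hDd ξ) (hDne ξ)
    have heq : (0 * D ξ - vp * ((vp - 1) * (E ξ * (-s * vp / μ)))) / (D ξ) ^ 2 = F' ξ := by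
      rw [hF'def]; ring
    rw [heq] at h
    exact h
  have hvF : ∀ ξ : ℝ, 0 < ξ → vbar ξ = F ξ := by
    intro ξ hξ
    rw [hvbar, if_neg (not_le.2 hξ)]
  have L1 : ∀ t y : ℝ, 0 < y - s * t →
      HasDerivAt (fun z => ubar (z - s * t)) (-(s * F' (y - s * t))) y := by
    intro t y hy
    have hinner : HasDerivAt (fun z : ℝ => z - s * t) 1 y := (hasDerivAt_id y).sub_const _
    have hcomp : HasDerivAt (fun z : ℝ => F (z - s * t)) (F' (y - s * t) * 1) y :=
      (hFd _).comp y hinner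
    have hmain : HasDerivAt (fun z : ℝ => up + s * vp - s * F (z - s * t))
        (0 - s * (F' (y - s * t) * 1)) y :=
      (hasDerivAt_const y (up + s * vp)).sub (hcomp.const_mul s)
    have h1 : ∀ᶠ z in 𝓝 y, 0 < z - s * t :=
      ((continuous_id.sub continuous_const).tendsto y).eventually_const_lt hy
    have hev : (fun z : ℝ => ubar (z - s * t)) =ᶠ[𝓝 y]
        fun z => up + s * vp - s * F (z - s * t) :=
      h1.mono fun z hz => by
        show ubar (z - s * t) = up + s * vp - s * F (z - s * t)
        rw [hubar, hvF _ hz]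
    have := hmain.congr_of_eventuallyEq hev
    simpa using this
  have L2 : ∀ t y : ℝ, y - s * t < 0 → deriv (fun z => ubar (z - s * t)) y = 0 := by
    intro t y hy
    have h1 : ∀ᶠ z in 𝓝 y, z - s * t < 0 :=
      ((continuous_id.sub continuous_const).tendsto y).eventually_lt_const hy
    have hev : (fun z : ℝ => ubar (z - s * t)) =ᶠ[𝓝 y] fun _ => up + s * vp - s * 1 :=
      h1.mono fun z hz => by
        show ubar (z - s * t) = up + s * vp - s * 1
        rw [hubar, hvbar, if_pos hz.le]
    rw [hev.deriv_eq, deriv_const]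
  constructor
  · intro t x hx
    have hξne : x - s * t ≠ 0 := sub_ne_zero.2 hx
    rcases hξne.lt_or_gt with hneg | hpos
    · -- left of the interface
      have ht1 : ∀ᶠ τ in 𝓝 t, x - s * τ < 0 :=
        ((continuous_const.sub (continuous_const.mul continuous_id)).tendsto t).eventually_lt_const hneg
      have hx1 : ∀ᶠ y in 𝓝 x, y - s * t < 0 :=
        ((continuous_id.sub continuous_const).tendsto x).eventually_lt_const hneg
      have hv_t : deriv (fun τ => vbar (x - s * τ)) t = 0 := by
        have hev : (fun τ : ℝ => vbar (x - s * τ)) =ᶠ[𝓝 t] fun _ => (1 : ℝ) :=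
          ht1.mono fun τ hτ => by
            show vbar (x - s * τ) = 1
            rw [hvbar, if_pos hτ.le]
        rw [hev.deriv_eq, deriv_const]
      have hu_x : deriv (fun y => ubar (y - s * t)) x = 0 := L2 t x hneg
      have hu_t : deriv (fun τ => ubar (x - s * τ)) t = 0 := by
        have hev : (fun τ : ℝ => ubar (x - s * τ)) =ᶠ[𝓝 t] fun _ => up + s * vp - s * 1 :=
          ht1.mono fun τ hτ => by
            show ubar (x - s * τ) = up + s * vp - s * 1
            rw [hubar, hvbar, if_pos hτ.le]
        rw [hev.deriv_eq, deriv_const]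
      have hp_x : deriv (fun y => pbar (y - s * t)) x = 0 := by
        have hev : (fun y : ℝ => pbar (y - s * t)) =ᶠ[𝓝 x] fun _ => s ^ 2 * (vp - 1) :=
          hx1.mono fun y hy => by
            show pbar (y - s * t) = s ^ 2 * (vp - 1)
            rw [hpbar, if_pos hy.le]
        rw [hev.deriv_eq, deriv_const]
      have hflux : deriv (fun y => (1 / vbar (y - s * t)) *
          deriv (fun z => ubar (z - s * t)) y) x = 0 := by
        have hev : (fun y : ℝ => (1 / vbar (y - s * t)) * deriv (fun z => ubar (z - s * t)) y)
            =ᶠ[𝓝 x] fun _ => (0 : ℝ) :=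
          hx1.mono fun y hy => by
            show (1 / vbar (y - s * t)) * deriv (fun z => ubar (z - s * t)) y = 0
            rw [L2 t y hy, mul_zero]
        rw [hev.deriv_eq, deriv_const]
      exact ⟨by rw [hv_t, hu_x]; ring, by rw [hu_t, hp_x, hflux]; ring⟩
    · -- right of the interface
      have ht1 : ∀ᶠ τ in 𝓝 t, 0 < x - s * τ :=
        ((continuous_const.sub (continuous_const.mul continuous_id)).tendsto t).eventually_const_lt hpos
      have hx1 : ∀ᶠ y in 𝓝 x, 0 < y - s * t :=
        ((continuous_id.sub continuous_const).tendsto x).eventually_const_lt hpos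
      have hinτ : HasDerivAt (fun τ : ℝ => x - s * τ) (-s) t := by
        have h := (hasDerivAt_const t x).sub ((hasDerivAt_id t).const_mul s)
        simp at h
        exact h
      have hcompF : HasDerivAt (fun τ : ℝ => F (x - s * τ)) (F' (x - s * t) * (-s)) t := by
        have h := (hFd (x - s * t)).comp t hinτ
        simpa [Function.comp_def] using h
      have hv_t : deriv (fun τ => vbar (x - s * τ)) t = F' (x - s * t) * (-s) := by
        have hev : (fun τ : ℝ => vbar (x - s * τ)) =ᶠ[𝓝 t] fun τ => F (x - s * τ) :=
          ht1.mono fun τ hτ => by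
            show vbar (x - s * τ) = F (x - s * τ)
            rw [hvF _ hτ]
        exact (hcompF.congr_of_eventuallyEq hev).deriv
      have hu_x : deriv (fun y => ubar (y - s * t)) x = -(s * F' (x - s * t)) :=
        (L1 t x hpos).deriv
      have hu_t : deriv (fun τ => ubar (x - s * τ)) t = 0 - s * (F' (x - s * t) * (-s)) := by
        have hmain : HasDerivAt (fun τ : ℝ => up + s * vp - s * F (x - s * τ))
            (0 - s * (F' (x - s * t) * (-s))) t :=
          (hasDerivAt_const t (up + s * vp)).sub (hcompF.const_mul s)
        have hev : (fun τ : ℝ => ubar (x - s * τ)) =ᶠ[𝓝 t]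
            fun τ => up + s * vp - s * F (x - s * τ) :=
          ht1.mono fun τ hτ => by
            show ubar (x - s * τ) = up + s * vp - s * F (x - s * τ)
            rw [hubar, hvF _ hτ]
        exact (hmain.congr_of_eventuallyEq hev).deriv
      have hp_x : deriv (fun y => pbar (y - s * t)) x = 0 := by
        have hev : (fun y : ℝ => pbar (y - s * t)) =ᶠ[𝓝 x] fun _ => (0 : ℝ) :=
          hx1.mono fun y hy => by
            show pbar (y - s * t) = 0
            rw [hpbar, if_neg (not_le.2 hy)]
        rw [hev.deriv_eq, deriv_const]
      -- the flux term
      set G : ℝ → ℝ := fun η => -(s * (vp - 1) * (s * vp / μ)) * E η / D η with hGdef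
      have hGd : ∀ η, HasDerivAt G
          ((-(s * (vp - 1) * (s * vp / μ)) * (E η * (-s * vp / μ)) * D η
            - -(s * (vp - 1) * (s * vp / μ)) * E η * ((vp - 1) * (E η * (-s * vp / μ))))
            / D η ^ 2) η := by
        intro η
        have h := ((hEd η).const_mul (-(s * (vp - 1) * (s * vp / μ)))).div (hDd η) (hDne η)
        simp [hGdef] at h ⊢
        exact h
      have hfluxev : (fun y : ℝ => (1 / vbar (y - s * t)) * deriv (fun z => ubar (z - s * t)) y)
          =ᶠ[𝓝 x] fun y => G (y - s * t) := by
        refine hx1.mono fun y hy => ?_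
        show (1 / vbar (y - s * t)) * deriv (fun z => ubar (z - s * t)) y = G (y - s * t)
        rw [(L1 t y hy).deriv, hvF _ hy]
        have h1 := hDne (y - s * t)
        simp only [hFdef, hF'def, hGdef]
        field_simp
      have hflux : deriv (fun y => (1 / vbar (y - s * t)) *
          deriv (fun z => ubar (z - s * t)) y) x =
          ((-(s * (vp - 1) * (s * vp / μ)) * (E (x - s * t) * (-s * vp / μ)) * D (x - s * t)
            - -(s * (vp - 1) * (s * vp / μ)) * E (x - s * t)
              * ((vp - 1) * (E (x - s * t) * (-s * vp / μ))))
            / D (x - s * t) ^ 2) * 1 := by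
        rw [hfluxev.deriv_eq]
        have hinner : HasDerivAt (fun y : ℝ => y - s * t) 1 x := (hasDerivAt_id x).sub_const _
        have h := (hGd (x - s * t)).comp x hinner
        have h2 : (fun y : ℝ => G (y - s * t)) = G ∘ fun y : ℝ => y - s * t := rfl
        rw [h2]
        exact h.deriv
      refine ⟨by rw [hv_t, hu_x]; ring, ?_⟩
      rw [hu_t, hp_x, hflux]
      have h1 : D (x - s * t) ≠ 0 := hDne (x - s * t)
      simp only [hF'def, hDdef] at *
      field_simp
      ring
  · intro t x
    by_cases hξ : x - s * t ≤ 0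
    · refine ⟨by rw [hvbar, if_pos hξ], by rw [hvbar, if_pos hξ]; ring, ?_⟩
      rw [hpbar, if_pos hξ]
      nlinarith [sq_nonneg s]
    · push_neg at hξ
      have hE1 : E (x - s * t) < 1 := by
        rw [hEdef]
        apply Real.exp_lt_one_iff.2
        apply div_neg_of_neg_of_pos _ hμ
        nlinarith [mul_pos (mul_pos hs0 (show (0:ℝ) < vp by linarith)) hξ]
      have hDlt : D (x - s * t) < vp := by
        simp only [hDdef]
        nlinarith [hE0 (x - s * t)]
      have h1 : 1 < vbar (x - s * t) := by
        rw [hvF _ hξ]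
        exact (one_lt_div (hD0 _)).2 hDlt
      refine ⟨h1.le, ?_, ?_⟩
      · rw [hpbar, if_neg (not_le.2 hξ)]; ring
      · rw [hpbar, if_neg (not_le.2 hξ)]
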